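/- Let d ≥ 1, λ ≥ 0, K ≥ 0, and let φ : ℝ^d → ℝ be K-Lipschitz and λ-concave. Fix t > 0 and set ψ_t(y) = ‖y‖²/2 + t·φ(y), ψ_t*(x) = sup_y (⟨x,y⟩ − ψ_t(y)), and ψ_t**(y) = sup_x (⟨x,y⟩ − ψ_t*(x)). Then ψ_t** is (1+λt)-concave, i.e. y ↦ ψ_t**(y) − ((1+λt)/2)‖y‖² is concave on ℝ^d. -/
import Mathlib


open scoped RealInnerProductSpace
noncomputable section

/-- Legendre transform: `f*(x) = sup_y (⟨x,y⟩ − f(y))`. -/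
def conj {d : ℕ} (f : EuclideanSpace ℝ (Fin d) → ℝ)
    (x : EuclideanSpace ℝ (Fin d)) : ℝ :=
  ⨆ y : EuclideanSpace ℝ (Fin d), (⟪x, y⟫ - f y)

/-- `ψ_t(y) = ‖y‖²/2 + t φ(y)`. -/
def psiFun {d : ℕ} (φ : EuclideanSpace ℝ (Fin d) → ℝ) (t : ℝ)
    (y : EuclideanSpace ℝ (Fin d)) : ℝ :=
  ‖y‖ ^ 2 / 2 + t * φ y

set_option maxHeartbeats 1000000 in
theorem stmt17 (d : ℕ) (hd : 1 ≤ d) (lam K : ℝ) (hlam : 0 ≤ lam) (hK : 0 ≤ K)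
    (φ : EuclideanSpace ℝ (Fin d) → ℝ)
    (hLip : ∀ y z, |φ y - φ z| ≤ K * ‖y - z‖)
    (hConc : ConcaveOn ℝ Set.univ (fun y => φ y - lam / 2 * ‖y‖ ^ 2))
    (t : ℝ) (ht : 0 < t) :
    ConcaveOn ℝ Set.univ
      (fun y => conj (conj (psiFun φ t)) y - (1 + lam * t) / 2 * ‖y‖ ^ 2) := by
  set c : ℝ := 1 + lam * t with hcdef
  have hc : 0 < c := by positivity
  have hc0 : c ≠ 0 := hc.ne'
  set ψ := psiFun φ t with hψdef
  set g := fun y => t * (φ y - lam / 2 * ‖y‖ ^ 2) with hgdef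
  have hg : ConcaveOn ℝ Set.univ g := by
    have := hConc.smul ht.le
    simpa [hgdef, smul_eq_mul] using this
  have hψg : ∀ y, ψ y = c * ‖y‖ ^ 2 / 2 + g y := by
    intro y
    simp only [hψdef, hgdef, psiFun, hcdef]
    ring
  -- boundedness of the inner sup
  have hbdd1 : ∀ x, BddAbove (Set.range fun y => ⟪x, y⟫ - ψ y) := by
    intro x
    refine ⟨(‖x‖ + t * K) ^ 2 / 2 - t * φ 0, ?_⟩
    rintro _ ⟨y, rfl⟩
    have h1 : ⟪x, y⟫ ≤ ‖x‖ * ‖y‖ := real_inner_le_norm x y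
    have h2 : |φ y - φ 0| ≤ K * ‖y‖ := by simpa using hLip y 0
    have h3 : φ 0 - K * ‖y‖ ≤ φ y := by
      have := abs_le.mp h2
      linarith [this.1]
    have h4 : (0:ℝ) ≤ ‖y‖ := norm_nonneg y
    have h5 : (0:ℝ) ≤ ‖x‖ := norm_nonneg x
    have hsq : (0:ℝ) ≤ ((‖x‖ + t * K) - ‖y‖) ^ 2 := sq_nonneg _
    simp only [hψdef, psiFun]
    nlinarith [mul_le_mul_of_nonneg_left h3 ht.le]
  have hle1 : ∀ (x y : EuclideanSpace ℝ (Fin d)), ⟪x, y⟫ - ψ y ≤ conj ψ x := by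
    intro x y
    exact le_ciSup (hbdd1 x) y
  have hbdd2 : ∀ y, BddAbove (Set.range fun x => ⟪y, x⟫ - conj ψ x) := by
    intro y
    refine ⟨ψ y, ?_⟩
    rintro _ ⟨x, rfl⟩
    show ⟪y, x⟫ - conj ψ x ≤ ψ y
    have := hle1 x y
    rw [real_inner_comm x y]
    linarith
  have hle2 : ∀ (y x : EuclideanSpace ℝ (Fin d)), ⟪x, y⟫ - conj ψ x ≤ conj (conj ψ) y := by
    intro y x
    have h := le_ciSup (hbdd2 y) x
    rw [real_inner_comm x y] at h
    exact h
  -- key algebraic identity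
  have hiden : ∀ x y : EuclideanSpace ℝ (Fin d), ⟪x, y⟫ - ‖x‖ ^ 2 / (2 * c) - c * ‖y‖ ^ 2 / 2
      = -(‖x - c • y‖ ^ 2 / (2 * c)) := by
    intro x y
    have h1 : ‖x - c • y‖ ^ 2 = ‖x‖ ^ 2 - 2 * ⟪x, c • y⟫ + ‖c • y‖ ^ 2 :=
      norm_sub_sq_real x (c • y)
    have h2 : ⟪x, c • y⟫ = c * ⟪x, y⟫ := real_inner_smul_right x y c
    have h3 : ‖c • y‖ ^ 2 = c ^ 2 * ‖y‖ ^ 2 := by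
      rw [norm_smul, Real.norm_eq_abs, mul_pow, sq_abs]
    rw [h1, h2, h3]
    field_simp
    ring
  have hiden2 : ∀ x y : EuclideanSpace ℝ (Fin d), ⟪x, y⟫ - ψ y - ‖x‖ ^ 2 / (2 * c)
      = -(g y) - ‖x - c • y‖ ^ 2 / (2 * c) := by
    intro x y
    have := hiden x y
    have h := hψg y
    linarith
  -- Claim 1: k(x) = conj ψ x - ‖x‖²/(2c) is convex
  have hk : ∀ (x₁ x₂ : EuclideanSpace ℝ (Fin d)) (a b : ℝ), 0 ≤ a → 0 ≤ b → a + b = 1 →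
      conj ψ (a • x₁ + b • x₂) - ‖a • x₁ + b • x₂‖ ^ 2 / (2 * c)
        ≤ a * (conj ψ x₁ - ‖x₁‖ ^ 2 / (2 * c)) + b * (conj ψ x₂ - ‖x₂‖ ^ 2 / (2 * c)) := by
    intro x₁ x₂ a b ha hb hab
    set xb := a • x₁ + b • x₂ with hxb
    rw [sub_le_iff_le_add]
    show (⨆ y : EuclideanSpace ℝ (Fin d), (⟪xb, y⟫ - ψ y)) ≤ _
    apply ciSup_le
    intro y
    set y₁ := y + c⁻¹ • (x₁ - xb) with hy₁
    set y₂ := y + c⁻¹ • (x₂ - xb) with hy₂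
    have hycomb : a • y₁ + b • y₂ = y := by
      have hb' : b = 1 - a := by linarith
      simp only [hy₁, hy₂, hxb, hb']
      module
    have hx₁ : x₁ - c • y₁ = xb - c • y := by
      have : c • (c⁻¹ • (x₁ - xb)) = x₁ - xb := smul_inv_smul₀ hc0 _
      simp only [hy₁, smul_add, this]
      abel
    have hx₂ : x₂ - c • y₂ = xb - c • y := by
      have : c • (c⁻¹ • (x₂ - xb)) = x₂ - xb := smul_inv_smul₀ hc0 _
      simp only [hy₂, smul_add, this]
      abel
    have hgy : a * g y₁ + b * g y₂ ≤ g y := by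
      have := hg.2 (Set.mem_univ y₁) (Set.mem_univ y₂) ha hb hab
      rw [hycomb] at this
      simpa [smul_eq_mul] using this
    have hk₁ : -(g y₁) - ‖xb - c • y‖ ^ 2 / (2 * c) + ‖x₁‖ ^ 2 / (2 * c) ≤ conj ψ x₁ := by
      have := hle1 x₁ y₁
      have h2 := hiden2 x₁ y₁
      rw [hx₁] at h2
      linarith
    have hk₂ : -(g y₂) - ‖xb - c • y‖ ^ 2 / (2 * c) + ‖x₂‖ ^ 2 / (2 * c) ≤ conj ψ x₂ := by
      have := hle1 x₂ y₂
      have h2 := hiden2 x₂ y₂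
      rw [hx₂] at h2
      linarith
    have hid := hiden2 xb y
    have e₁ := mul_le_mul_of_nonneg_left hk₁ ha
    have e₂ := mul_le_mul_of_nonneg_left hk₂ hb
    have habQ : a * (‖xb - c • y‖ ^ 2 / (2 * c)) + b * (‖xb - c • y‖ ^ 2 / (2 * c))
        = ‖xb - c • y‖ ^ 2 / (2 * c) := by
      rw [← add_mul, hab, one_mul]
    linarith [e₁, e₂, hgy, hid, habQ]
  -- Now the main concavity
  constructor
  · exact convex_univ
  intro y₁ _ y₂ _ a b ha hb hab
  simp only [smul_eq_mul]
  rcases eq_or_lt_of_le ha with ha0 | ha'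
  · have hb1 : b = 1 := by linarith
    simp [← ha0, hb1]
  rcases eq_or_lt_of_le hb with hb0 | hb'
  · have ha1 : a = 1 := by linarith
    simp [← hb0, ha1]
  set yb := a • y₁ + b • y₂ with hyb
  have hcq : ∀ y : EuclideanSpace ℝ (Fin d), (1 + lam * t) / 2 * ‖y‖ ^ 2 = c * ‖y‖ ^ 2 / 2 := by
    intro y; rw [hcdef]; ring
  -- key pointwise inequality
  have key : ∀ x₁ x₂,
      a * (⟪x₁, y₁⟫ - conj ψ x₁) + b * (⟪x₂, y₂⟫ - conj ψ x₂)
        - a * (c * ‖y₁‖ ^ 2 / 2) - b * (c * ‖y₂‖ ^ 2 / 2)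
        ≤ conj (conj ψ) yb - c * ‖yb‖ ^ 2 / 2 := by
    intro x₁ x₂
    set xb := a • x₁ + b • x₂ with hxb
    have h0 : ⟪xb, yb⟫ - conj ψ xb ≤ conj (conj ψ) yb := hle2 yb xb
    have hkconv := hk x₁ x₂ a b ha hb hab
    rw [← hxb] at hkconv
    -- combination identity for the residual vector
    have hvec : xb - c • yb = a • (x₁ - c • y₁) + b • (x₂ - c • y₂) := by
      simp only [hxb, hyb]
      module
    have hnorm : ‖xb - c • yb‖ ^ 2 ≤ a * ‖x₁ - c • y₁‖ ^ 2 + b * ‖x₂ - c • y₂‖ ^ 2 := by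
      have h1 : ‖xb - c • yb‖ ≤ a * ‖x₁ - c • y₁‖ + b * ‖x₂ - c • y₂‖ := by
        rw [hvec]
        refine le_trans (norm_add_le _ _) ?_
        rw [norm_smul, norm_smul, Real.norm_eq_abs, Real.norm_eq_abs,
          abs_of_nonneg ha, abs_of_nonneg hb]
      have h2 : (0:ℝ) ≤ ‖xb - c • yb‖ := norm_nonneg _
      have hb1 : b = 1 - a := by linarith
      subst hb1
      nlinarith [mul_nonneg (mul_nonneg ha hb) (sq_nonneg (‖x₁ - c • y₁‖ - ‖x₂ - c • y₂‖)),
        mul_le_mul h1 h1 h2 (by positivity), norm_nonneg (x₁ - c • y₁), norm_nonneg (x₂ - c • y₂)]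
    have hdiv : ‖xb - c • yb‖ ^ 2 / (2 * c)
        ≤ (a * ‖x₁ - c • y₁‖ ^ 2 + b * ‖x₂ - c • y₂‖ ^ 2) / (2 * c) := by
      apply div_le_div_of_nonneg_right hnorm
      positivity
    have hid0 := hiden xb yb
    have hid1 := hiden x₁ y₁
    have hid2 := hiden x₂ y₂
    have e₁ : a * (⟪x₁, y₁⟫ - ‖x₁‖ ^ 2 / (2 * c) - c * ‖y₁‖ ^ 2 / 2)
        = a * (-(‖x₁ - c • y₁‖ ^ 2 / (2 * c))) := by rw [hid1]
    have e₂ : b * (⟪x₂, y₂⟫ - ‖x₂‖ ^ 2 / (2 * c) - c * ‖y₂‖ ^ 2 / 2)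
        = b * (-(‖x₂ - c • y₂‖ ^ 2 / (2 * c))) := by rw [hid2]
    have hfin : a * (⟪x₁, y₁⟫ - conj ψ x₁) + b * (⟪x₂, y₂⟫ - conj ψ x₂)
        - a * (c * ‖y₁‖ ^ 2 / 2) - b * (c * ‖y₂‖ ^ 2 / 2)
        ≤ ⟪xb, yb⟫ - conj ψ xb - c * ‖yb‖ ^ 2 / 2 := by
      ring_nf at e₁ e₂ hkconv hdiv hid0 ⊢
      linarith [e₁, e₂, hkconv, hdiv, hid0]
    linarith
  -- assemble using the sup characterization
  have h2 : ∀ x₁, conj (conj ψ) y₂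
      ≤ (conj (conj ψ) yb - c * ‖yb‖ ^ 2 / 2 + a * (c * ‖y₁‖ ^ 2 / 2) + b * (c * ‖y₂‖ ^ 2 / 2)
          - a * (⟪x₁, y₁⟫ - conj ψ x₁)) / b := by
    intro x₁
    show (⨆ x : EuclideanSpace ℝ (Fin d), (⟪y₂, x⟫ - conj ψ x)) ≤ _
    apply ciSup_le
    intro x₂
    rw [real_inner_comm x₂ y₂]
    rw [le_div_iff₀ hb']
    have := key x₁ x₂
    nlinarith [key x₁ x₂]
  have h3 : ∀ x₁, a * (⟪x₁, y₁⟫ - conj ψ x₁)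
      ≤ conj (conj ψ) yb - c * ‖yb‖ ^ 2 / 2 + a * (c * ‖y₁‖ ^ 2 / 2) + b * (c * ‖y₂‖ ^ 2 / 2)
        - b * conj (conj ψ) y₂ := by
    intro x₁
    have := h2 x₁
    rw [le_div_iff₀ hb'] at this
    nlinarith [this]
  have h4 : conj (conj ψ) y₁
      ≤ (conj (conj ψ) yb - c * ‖yb‖ ^ 2 / 2 + a * (c * ‖y₁‖ ^ 2 / 2) + b * (c * ‖y₂‖ ^ 2 / 2)
          - b * conj (conj ψ) y₂) / a := by
    show (⨆ x : EuclideanSpace ℝ (Fin d), (⟪y₁, x⟫ - conj ψ x)) ≤ _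
    apply ciSup_le
    intro x₁
    rw [real_inner_comm x₁ y₁]
    rw [le_div_iff₀ ha']
    nlinarith [h3 x₁]
  rw [le_div_iff₀ ha'] at h4
  ring_nf at h4 ⊢
  linarith [h4]
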